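/- Let K be a field, S = K[X₁,...,X_n] with ℤⁿ-grading, and let M be a bounded below ℤⁿ-graded S-module with linear resolution, i.e., Tor_i^S(M,K) is concentrated in total degree i for all i. If Tor_p^S(M,K) ≠ 0 then for each 0 ≤ i ≤ p there exist at least binom(p,i) distinct multidegrees b ∈ ℕⁿ with |b| = i and Tor_i^S(M,K)_b ≠ 0. -/

import Mathlib

/-- A minimal `ℤⁿ`-graded free resolution (not necessarily of finite rank) of a module `M`
over `S = K[X₁,…,Xₙ]`.  Its multidegree labels compute the `ℤⁿ`-graded Tor groups:
`Tor_i^S(M,K)_b ≅ K^{#{x ∈ ι i : deg x = b}}`. -/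
structure MinGradedFreeRes (K : Type) [Field K] (n : ℕ) (M : Type) [AddCommGroup M]
    [Module (MvPolynomial (Fin n) K) M] where
  ι : ℕ → Type
  deg : ∀ i, ι i → Fin n → ℤ
  d : ∀ i, (ι (i + 1) →₀ MvPolynomial (Fin n) K) →ₗ[MvPolynomial (Fin n) K]
    (ι i →₀ MvPolynomial (Fin n) K)
  aug : (ι 0 →₀ MvPolynomial (Fin n) K) →ₗ[MvPolynomial (Fin n) K] M
  aug_surj : Function.Surjective aug
  exact_aug : Function.Exact (d 0) aug
  exact : ∀ i, Function.Exact (d (i + 1)) (d i)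
  minimal : ∀ i x y, MvPolynomial.coeff 0 ((d i) (Finsupp.single x 1) y) = 0
  graded : ∀ i x y m, MvPolynomial.coeff m ((d i) (Finsupp.single x 1) y) ≠ 0 →
    (fun j => (m j : ℤ)) + deg i y = deg (i + 1) x

namespace LRB

open MvPolynomial

variable {K : Type} [Field K] {n : ℕ} {M : Type} [AddCommGroup M]
  [Module (MvPolynomial (Fin n) K) M]

abbrev VV (res : MinGradedFreeRes K n M) (i : ℕ) : Type := res.ι i →₀ K
abbrev FF (res : MinGradedFreeRes K n M) (i : ℕ) : Type :=
  res.ι i →₀ MvPolynomial (Fin n) K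

variable (res : MinGradedFreeRes K n M)

/-- embed K-coefficients as constants -/
noncomputable def emb (i : ℕ) : VV res i →ₗ[K] FF res i :=
  Finsupp.mapRange.linearMap (Algebra.linearMap K (MvPolynomial (Fin n) K))

lemma emb_apply (i : ℕ) (v : VV res i) (x : res.ι i) :
    emb res i v x = MvPolynomial.C (v x) := by
  simp [emb, Algebra.linearMap, algebraMap_eq]

/-- the "linear strand" maps: K-coefficient of X_j in d -/
noncomputable def tA (i : ℕ) (j : Fin n) : VV res (i+1) →ₗ[K] VV res i :=
  (Finsupp.mapRange.linearMap (MvPolynomial.lcoeff K (Finsupp.single j 1))).comp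
    (((res.d i).restrictScalars K).comp (emb res (i+1)))

lemma tA_apply (i : ℕ) (j : Fin n) (v : VV res (i+1)) (y : res.ι i) :
    tA res i j v y = MvPolynomial.coeff (Finsupp.single j 1) (res.d i (emb res (i+1) v) y) := by
  simp [tA, lcoeff]

/-- homogeneous of multidegree c -/
def Hm (i : ℕ) (c : Fin n → ℤ) (v : VV res i) : Prop :=
  ∀ x, v x ≠ 0 → res.deg i x = c

def unit (n : ℕ) (j : Fin n) : Fin n → ℤ := fun j' => if j = j' then 1 else 0

lemma sum_unit (j : Fin n) : (∑ j', unit n j j') = 1 := by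
  simp [unit]

lemma cast_single (k : Fin n) :
    (fun j' => (((Finsupp.single k 1 : Fin n →₀ ℕ)) j' : ℤ)) = unit n k := by
  funext j'
  simp only [Finsupp.single_apply, unit]
  split <;> simp

/-- expansion of d applied to a general element, pointwise -/
lemma dd_apply (i : ℕ) (z : FF res (i+1)) (y : res.ι i) :
    res.d i z y = ∑ x ∈ z.support, z x * (res.d i (Finsupp.single x 1) y) := by
  conv_lhs => rw [← Finsupp.sum_single z]
  have : res.d i (z.sum Finsupp.single) = z.sum fun x s => s • res.d i (Finsupp.single x 1) := by
    rw [map_finsuppSum]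
    refine Finsupp.sum_congr fun x hx => ?_
    rw [← map_smul]
    congr 1
    rw [Finsupp.smul_single, smul_eq_mul, mul_one]
  rw [this, Finsupp.sum_apply, Finsupp.sum]
  refine Finset.sum_congr rfl fun x hx => ?_
  rw [Finsupp.smul_apply, smul_eq_mul]

lemma support_emb (i : ℕ) (v : VV res i) : (emb res i v).support = v.support := by
  ext x
  simp [Finsupp.mem_support_iff, emb_apply]

lemma dd_emb_apply (i : ℕ) (v : VV res (i+1)) (y : res.ι i) :
    res.d i (emb res (i+1) v) y
      = ∑ x ∈ v.support, MvPolynomial.C (v x) * (res.d i (Finsupp.single x 1) y) := by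
  rw [dd_apply, support_emb]
  exact Finset.sum_congr rfl fun x _ => by rw [emb_apply]

/-- constant coefficients of anything in the image of d vanish -/
lemma zc (i : ℕ) (z : FF res (i+1)) (y : res.ι i) :
    MvPolynomial.coeff 0 (res.d i z y) = 0 := by
  rw [dd_apply]
  rw [MvPolynomial.coeff_sum]
  refine Finset.sum_eq_zero fun x _ => ?_
  have h0 : (MvPolynomial.coeff 0 : MvPolynomial (Fin n) K → K) = MvPolynomial.constantCoeff := rfl
  rw [h0]
  rw [map_mul]
  have := res.minimal i x y
  rw [h0] at this
  rw [this, mul_zero]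

lemma sum_eq_one_single (m : Fin n →₀ ℕ) (h : (∑ j, m j) = 1) :
    ∃ j₀ : Fin n, (Finsupp.single j₀ 1 : Fin n →₀ ℕ) = m := by
  have hex : ∃ j₀ : Fin n, m j₀ ≠ 0 := by
    by_contra hc
    push_neg at hc
    simp [hc] at h
  obtain ⟨j₀, hj₀⟩ := hex
  refine ⟨j₀, ?_⟩
  have hsplit : m j₀ + (∑ j ∈ Finset.univ.erase j₀, m j) = ∑ j, m j :=
    Finset.add_sum_erase Finset.univ (fun j => m j) (Finset.mem_univ j₀)
  rw [h] at hsplit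
  have h1 : m j₀ = 1 ∧ (∑ j ∈ Finset.univ.erase j₀, m j) = 0 := by omega
  ext j
  rcases eq_or_ne j j₀ with rfl | hne
  · simp [h1.1]
  · have hz : m j = 0 := (Finset.sum_eq_zero_iff.mp h1.2) j (by simp [hne])
    simp [Finsupp.single_apply, hne, Ne.symm hne, hz]

/-- key expansion -/
lemma star (hlin : ∀ (i : ℕ) (x : res.ι i), (∑ j, res.deg i x j) = (i : ℤ))
    (i : ℕ) (c : Fin n → ℤ) (v : VV res (i+1)) (hv : Hm res (i+1) c v)
    (hc : (∑ j, c j) = (i + 1 : ℤ)) :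
    res.d i (emb res (i+1) v)
      = ∑ j : Fin n, (MvPolynomial.X j : MvPolynomial (Fin n) K) • emb res i (tA res i j v) := by
  refine Finsupp.ext fun y => ?_
  have hrhs : (∑ j : Fin n, (MvPolynomial.X j : MvPolynomial (Fin n) K) • emb res i (tA res i j v)) y
      = ∑ j : Fin n, MvPolynomial.X j * MvPolynomial.C (tA res i j v y) := by
    rw [Finsupp.finset_sum_apply]
    exact Finset.sum_congr rfl fun j _ => by rw [Finsupp.smul_apply, smul_eq_mul, emb_apply]
  rw [hrhs]
  apply MvPolynomial.ext
  intro m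
  rw [MvPolynomial.coeff_sum]
  have hterm : ∀ j : Fin n, MvPolynomial.coeff m (MvPolynomial.X j * MvPolynomial.C (tA res i j v y))
      = if (Finsupp.single j 1 : Fin n →₀ ℕ) = m then tA res i j v y else 0 := by
    intro j
    rw [mul_comm, MvPolynomial.coeff_C_mul, MvPolynomial.coeff_X']
    split <;> simp
  simp only [hterm]
  by_cases hsing : ∃ j₀ : Fin n, (Finsupp.single j₀ 1 : Fin n →₀ ℕ) = m
  · obtain ⟨j₀, rfl⟩ := hsing
    have hcond : ∀ j : Fin n, ((Finsupp.single j 1 : Fin n →₀ ℕ) = Finsupp.single j₀ 1) ↔ j = j₀ :=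
      fun j => Finsupp.single_left_inj one_ne_zero
    have : (∑ j : Fin n, if (Finsupp.single j 1 : Fin n →₀ ℕ) = Finsupp.single j₀ 1
        then tA res i j v y else 0)
        = ∑ j : Fin n, if j = j₀ then tA res i j v y else 0 :=
      Finset.sum_congr rfl fun j _ => if_congr (hcond j) rfl rfl
    rw [this, Finset.sum_ite_eq' Finset.univ j₀ (fun j => tA res i j v y),
      if_pos (Finset.mem_univ j₀), tA_apply]
  · push_neg at hsing
    have hzero : (∑ j : Fin n, if (Finsupp.single j 1 : Fin n →₀ ℕ) = m
        then tA res i j v y else 0) = 0 :=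
      Finset.sum_eq_zero fun j _ => if_neg (hsing j)
    rw [hzero, dd_emb_apply, MvPolynomial.coeff_sum]
    refine Finset.sum_eq_zero fun x hx => ?_
    rw [MvPolynomial.coeff_C_mul]
    rcases eq_or_ne (MvPolynomial.coeff m (res.d i (Finsupp.single x 1) y)) 0 with hcz | hcz
    · rw [hcz, mul_zero]
    · exfalso
      have hg := res.graded i x y m hcz
      have hdx : res.deg (i+1) x = c := hv x (Finsupp.mem_support_iff.mp hx)
      have hsum : (∑ j, ((m j : ℤ) + res.deg i y j)) = ∑ j, c j := by
        rw [← hdx]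
        exact Finset.sum_congr rfl fun j _ => congrFun hg j
      rw [Finset.sum_add_distrib, hlin i y, hc] at hsum
      have hm1 : (∑ j, (m j : ℤ)) = 1 := by omega
      have hmn : (∑ j, m j) = 1 := by exact_mod_cast (by push_cast at hm1 ⊢; exact hm1 : ((∑ j, m j : ℕ) : ℤ) = 1)
      exact hsing _ (sum_eq_one_single m hmn).choose_spec

lemma Hm_tA (i : ℕ) (c : Fin n → ℤ) (v : VV res (i+1)) (hv : Hm res (i+1) c v) (k : Fin n) :
    Hm res i (c - unit n k) (tA res i k v) := by
  intro y hy
  rw [tA_apply, dd_emb_apply, MvPolynomial.coeff_sum] at hy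
  obtain ⟨x, hx, hne⟩ := Finset.exists_ne_zero_of_sum_ne_zero hy
  rw [MvPolynomial.coeff_C_mul] at hne
  have hce : MvPolynomial.coeff (Finsupp.single k 1) (res.d i (Finsupp.single x 1) y) ≠ 0 :=
    fun h => hne (by rw [h, mul_zero])
  have hg := res.graded i x y (Finsupp.single k 1) hce
  rw [cast_single, hv x (Finsupp.mem_support_iff.mp hx)] at hg
  funext j
  have := congrFun hg j
  simp only [Pi.add_apply] at this
  simp only [Pi.sub_apply]
  omega

lemma tA_zero (i : ℕ) (j : Fin n) : tA res i j (0 : VV res (i+1)) = 0 := map_zero _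

lemma tA_neg (i : ℕ) (j : Fin n) (v : VV res (i+1)) : tA res i j (-v) = - tA res i j v :=
  map_neg _ _

/-- joint injectivity of the linear strand maps -/
lemma exists_tA_ne (hlin : ∀ (i : ℕ) (x : res.ι i), (∑ j, res.deg i x j) = (i : ℤ))
    (i : ℕ) (c : Fin n → ℤ) (v : VV res (i+1)) (hv : Hm res (i+1) c v)
    (hc : (∑ j, c j) = (i + 1 : ℤ)) (hne : v ≠ 0) : ∃ j : Fin n, tA res i j v ≠ 0 := by
  by_contra hall
  push_neg at hall
  have h0 : res.d i (emb res (i+1) v) = 0 := by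
    rw [star res hlin i c v hv hc]
    refine Finset.sum_eq_zero fun j _ => ?_
    rw [hall j, map_zero, smul_zero]
  obtain ⟨w, hw⟩ := (res.exact i (emb res (i+1) v)).mp h0
  obtain ⟨x, hx⟩ := Finsupp.ne_iff.mp hne
  apply hx
  have : (MvPolynomial.constantCoeff (σ := Fin n) (R := K)) (emb res (i+1) v x) = v x := by
    rw [emb_apply]; exact MvPolynomial.constantCoeff_C _ _
  rw [← this, ← hw]
  exact zc res (i+1) w x

/-- the double coefficient extraction core -/
lemma core (hlin : ∀ (i : ℕ) (x : res.ι i), (∑ j, res.deg i x j) = (i : ℤ))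
    (i : ℕ) (c : Fin n → ℤ) (v : VV res (i+2)) (hv : Hm res (i+2) c v)
    (hc : (∑ j, c j) = (i + 2 : ℤ)) (μ : Fin n →₀ ℕ) (y : res.ι i) :
    (∑ k : Fin n, ∑ j : Fin n,
      (if (Finsupp.single k 1 + Finsupp.single j 1 : Fin n →₀ ℕ) = μ
        then tA res i j (tA res (i+1) k v) y else 0)) = 0 := by
  have h0 : res.d i (res.d (i+1) (emb res (i+2) v)) = 0 :=
    (res.exact i (res.d (i+1) (emb res (i+2) v))).mpr ⟨_, rfl⟩
  have hc1 : ∀ k : Fin n, (∑ j, (c - unit n k) j) = (i + 1 : ℤ) := by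
    intro k
    have : (∑ j, (c - unit n k) j) = (∑ j, c j) - (∑ j', unit n k j') := by
      rw [← Finset.sum_sub_distrib]; rfl
    rw [this, sum_unit, hc]; push_cast; ring
  rw [star res hlin (i+1) c v hv (by push_cast at hc ⊢; linarith), map_sum] at h0
  have hterm : ∀ k : Fin n,
      res.d i ((MvPolynomial.X k : MvPolynomial (Fin n) K) • emb res (i+1) (tA res (i+1) k v))
      = ∑ j : Fin n, (MvPolynomial.X k * MvPolynomial.X j : MvPolynomial (Fin n) K) •
          emb res i (tA res i j (tA res (i+1) k v)) := by
    intro k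
    rw [map_smul, star res hlin i (c - unit n k) (tA res (i+1) k v)
      (Hm_tA res (i+1) c v hv k) (hc1 k), Finset.smul_sum]
    exact Finset.sum_congr rfl fun j _ => by rw [smul_smul]
  simp only [hterm] at h0
  have happ := congrArg (fun f : FF res i => MvPolynomial.coeff μ (f y)) h0
  simp only [Finsupp.finset_sum_apply, Finsupp.coe_zero, Pi.zero_apply,
    MvPolynomial.coeff_zero, MvPolynomial.coeff_sum] at happ
  refine Eq.trans ?_ happ
  refine Finset.sum_congr rfl fun k _ => Finset.sum_congr rfl fun j _ => ?_
  refine Eq.symm ?_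
  rw [Finsupp.smul_apply, smul_eq_mul, emb_apply]
  have : (MvPolynomial.X k * MvPolynomial.X j : MvPolynomial (Fin n) K)
      * MvPolynomial.C (tA res i j (tA res (i+1) k v) y)
      = MvPolynomial.monomial (Finsupp.single k 1 + Finsupp.single j 1)
          (tA res i j (tA res (i+1) k v) y) := by
    rw [MvPolynomial.X, MvPolynomial.X, MvPolynomial.C_apply, MvPolynomial.monomial_mul,
      MvPolynomial.monomial_mul, add_zero, one_mul, one_mul]
  rw [this, MvPolynomial.coeff_monomial]

lemma monpair {a b c d : Fin n}
    (h : (Finsupp.single a 1 + Finsupp.single b 1 : Fin n →₀ ℕ)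
       = Finsupp.single c 1 + Finsupp.single d 1) :
    (a = c ∧ b = d) ∨ (a = d ∧ b = c) := by
  have ha := congrArg (fun f : Fin n →₀ ℕ => f a) h
  simp only [Finsupp.add_apply, Finsupp.single_apply] at ha
  have hac : a = c ∨ a = d := by
    by_contra hcon
    push_neg at hcon
    rcases eq_or_ne b a with rfl | h4
    · simp [Ne.symm hcon.1, Ne.symm hcon.2] at ha
    · simp [Ne.symm hcon.1, Ne.symm hcon.2, h4] at ha
  rcases hac with rfl | rfl
  · left
    refine ⟨rfl, ?_⟩
    have := add_left_cancel h
    exact (Finsupp.single_left_inj one_ne_zero).mp this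
  · right
    refine ⟨rfl, ?_⟩
    rw [add_comm (Finsupp.single c 1)] at h
    have := add_left_cancel h
    exact (Finsupp.single_left_inj one_ne_zero).mp this

lemma tAtA_self (hlin : ∀ (i : ℕ) (x : res.ι i), (∑ j, res.deg i x j) = (i : ℤ))
    (i : ℕ) (c : Fin n → ℤ) (v : VV res (i+2)) (hv : Hm res (i+2) c v)
    (hc : (∑ j, c j) = (i + 2 : ℤ)) (j : Fin n) :
    tA res i j (tA res (i+1) j v) = 0 := by
  refine Finsupp.ext fun y => ?_
  have hcore := core res hlin i c v hv hc (Finsupp.single j 1 + Finsupp.single j 1) y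
  have : ∀ k' : Fin n, (∑ j' : Fin n,
      if (Finsupp.single k' 1 + Finsupp.single j' 1 : Fin n →₀ ℕ)
        = Finsupp.single j 1 + Finsupp.single j 1
      then tA res i j' (tA res (i+1) k' v) y else 0)
      = if k' = j then tA res i j (tA res (i+1) k' v) y else 0 := by
    intro k'
    rcases eq_or_ne k' j with rfl | hk
    · rw [if_pos rfl]
      refine Finset.sum_eq_single_of_mem k' (Finset.mem_univ k') ?_ |>.trans (if_pos rfl)
      intro j' _ hj'
      refine if_neg fun hh => hj' ?_
      rcases monpair hh with ⟨_, h2⟩ | ⟨_, h2⟩ <;> exact h2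
    · rw [if_neg hk]
      refine Finset.sum_eq_zero fun j' _ => if_neg fun hh => ?_
      rcases monpair hh with ⟨h1, _⟩ | ⟨h1, _⟩ <;> exact hk h1
  rw [Finset.sum_congr rfl fun k' _ => this k', Finset.sum_ite_eq' Finset.univ j,
    if_pos (Finset.mem_univ j)] at hcore
  simp only [Finsupp.coe_zero, Pi.zero_apply]
  exact hcore

lemma tAtA_swap (hlin : ∀ (i : ℕ) (x : res.ι i), (∑ j, res.deg i x j) = (i : ℤ))
    (i : ℕ) (c : Fin n → ℤ) (v : VV res (i+2)) (hv : Hm res (i+2) c v)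
    (hc : (∑ j, c j) = (i + 2 : ℤ)) (j k : Fin n) :
    tA res i j (tA res (i+1) k v) = - tA res i k (tA res (i+1) j v) := by
  rcases eq_or_ne j k with rfl | hjk
  · rw [tAtA_self res hlin i c v hv hc j, neg_zero]
  refine Finsupp.ext fun y => ?_
  have hcore := core res hlin i c v hv hc (Finsupp.single k 1 + Finsupp.single j 1) y
  have hsplit : ∀ k' : Fin n, (∑ j' : Fin n,
      if (Finsupp.single k' 1 + Finsupp.single j' 1 : Fin n →₀ ℕ)
        = Finsupp.single k 1 + Finsupp.single j 1
      then tA res i j' (tA res (i+1) k' v) y else 0)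
      = (if k' = k then tA res i j (tA res (i+1) k v) y else 0)
        + (if k' = j then tA res i k (tA res (i+1) j v) y else 0) := by
    intro k'
    rcases eq_or_ne k' k with rfl | hk
    · rw [if_pos rfl, if_neg (fun hh : k' = j => hjk hh.symm), add_zero]
      refine Finset.sum_eq_single_of_mem j (Finset.mem_univ j) ?_ |>.trans (if_pos rfl)
      intro j' _ hj'
      refine if_neg fun hh => ?_
      rcases monpair hh with ⟨_, h2⟩ | ⟨h1, _⟩
      · exact hj' h2
      · exact hjk h1.symm
    · rw [if_neg hk]
      rcases eq_or_ne k' j with rfl | hj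
      · rw [if_pos rfl, zero_add]
        refine Finset.sum_eq_single_of_mem k (Finset.mem_univ k) ?_ |>.trans (if_pos (add_comm _ _))
        intro j' _ hj'
        refine if_neg fun hh => ?_
        rcases monpair hh with ⟨h1, _⟩ | ⟨_, h2⟩
        · exact hk h1
        · exact hj' h2
      · rw [if_neg hj, add_zero]
        refine Finset.sum_eq_zero fun j' _ => if_neg fun hh => ?_
        rcases monpair hh with ⟨h1, _⟩ | ⟨h1, _⟩
        · exact hk h1
        · exact hj h1
  rw [Finset.sum_congr rfl fun k' _ => hsplit k'] at hcore
  rw [Finset.sum_add_distrib, Finset.sum_ite_eq' Finset.univ k, if_pos (Finset.mem_univ k),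
    Finset.sum_ite_eq' Finset.univ j, if_pos (Finset.mem_univ j)] at hcore
  have : tA res i j (tA res (i+1) k v) y + tA res i k (tA res (i+1) j v) y = 0 := hcore
  rw [Finsupp.neg_apply]
  exact eq_neg_of_add_eq_zero_left hcore

/-- iterated application of strand maps along a list (head applied first, at the top) -/
noncomputable def tl (i : ℕ) : (l : List (Fin n)) → VV res (i + l.length) → VV res i
  | [], v => v
  | j :: l, v => tl i l (tA res (i + l.length) j v)

@[simp] lemma tl_nil (i : ℕ) (v : VV res (i + 0)) : tl res i [] v = v := rfl

lemma tl_cons (i : ℕ) (j : Fin n) (l : List (Fin n)) (v : VV res (i + (j :: l).length)) :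
    tl res i (j :: l) v = tl res i l (tA res (i + l.length) j v) := rfl

lemma tl_zero (i : ℕ) (l : List (Fin n)) : tl res i l (0 : VV res (i + l.length)) = 0 := by
  induction l with
  | nil => rfl
  | cons j l ih => rw [tl_cons, tA_zero]; exact ih

lemma tl_neg (i : ℕ) (l : List (Fin n)) (v : VV res (i + l.length)) :
    tl res i l (-v) = - tl res i l v := by
  induction l with
  | nil => rfl
  | cons j l ih => rw [tl_cons, tA_neg, ih, tl_cons]

/-- multidegree drop along a list -/
def el : List (Fin n) → Fin n → ℤ
  | [] => 0
  | j :: l => unit n j + el l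

lemma tl_Hm (i : ℕ) (l : List (Fin n)) (c : Fin n → ℤ) (v : VV res (i + l.length))
    (hv : Hm res (i + l.length) c v) : Hm res i (c - el l) (tl res i l v) := by
  induction l generalizing c with
  | nil => simpa [el] using hv
  | cons j l ih =>
    rw [tl_cons]
    have h1 := Hm_tA res (i + l.length) c v hv j
    have h2 := ih (c - unit n j) _ h1
    have : c - unit n j - el l = c - el (j :: l) := by
      funext j'; simp [el]; ring
    rwa [this] at h2

lemma Hm_sum_el (l : List (Fin n)) : (∑ j', el (n := n) l j') = l.length := by
  induction l with
  | nil => simp [el]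
  | cons j l ih =>
    have : (∑ j', el (j :: l) j') = (∑ j', unit n j j') + ∑ j', el l j' := by
      rw [← Finset.sum_add_distrib]; rfl
    rw [this, sum_unit, ih]
    simp [List.length_cons]
    push_cast
    ring

/-- transport along an equality of levels -/
def shV {m m' : ℕ} (h : m = m') (v : VV res m) : VV res m' := h ▸ v

@[simp] lemma shV_rfl {m : ℕ} (h : m = m) (v : VV res m) : shV res h v = v := rfl

lemma shV_ne_zero {m m' : ℕ} (h : m = m') (v : VV res m) : shV res h v ≠ 0 ↔ v ≠ 0 := by
  subst h; rfl

lemma shV_Hm {m m' : ℕ} (h : m = m') (c : Fin n → ℤ) (v : VV res m) (hv : Hm res m c v) :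
    Hm res m' c (shV res h v) := by subst h; exact hv

lemma shV_tA {m m' : ℕ} (h : m = m') (h' : m + 1 = m' + 1) (j : Fin n) (v : VV res (m+1)) :
    shV res h (tA res m j v) = tA res m' j (shV res h' v) := by subst h; rfl

lemma shV_shV {m m' m'' : ℕ} (h : m = m') (h' : m' = m'') (v : VV res m) :
    shV res h' (shV res h v) = shV res (h.trans h') v := by subst h; subst h'; rfl

lemma sum_sub_unit (c : Fin n → ℤ) (k : Fin n) :
    (∑ j', (c - unit n k) j') = (∑ j', c j') - 1 := by
  have : (∑ j', (c - unit n k) j') = (∑ j', c j') - (∑ j', unit n k j') := by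
    rw [← Finset.sum_sub_distrib]; rfl
  rw [this, sum_unit]

/-- a repeated letter kills the iterated strand map -/
lemma tl_dup (hlin : ∀ (i : ℕ) (x : res.ι i), (∑ j, res.deg i x j) = (i : ℤ)) :
    ∀ (l : List (Fin n)) (i : ℕ) (c : Fin n → ℤ) (v : VV res (i + l.length + 1)),
    Hm res (i + l.length + 1) c v → (∑ j', c j') = ((i + l.length + 1 : ℕ) : ℤ) →
    ∀ j ∈ l, tl res i l (tA res (i + l.length) j v) = 0 := by
  intro l
  induction l with
  | nil => intro i c v _ _ j hj; cases hj
  | cons a l ih =>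
    intro i c v hv hc j hj
    have hc' : (∑ j', c j') = ((i + l.length : ℕ) : ℤ) + 2 := by
      rw [hc]; push_cast [List.length_cons]; ring
    have hv' : Hm res (i + l.length + 2) c v := hv
    have hstep : tl res i (a :: l) (tA res (i + (a :: l).length) j v)
        = tl res i l (tA res (i + l.length) a (tA res (i + l.length + 1) j v)) := rfl
    rw [hstep]
    rcases List.mem_cons.mp hj with hja | hjl
    · subst hja
      rw [tAtA_self res hlin (i + l.length) c v hv' hc' j]
      exact tl_zero res i l
    · rw [tAtA_swap res hlin (i + l.length) c v hv' hc' a j, tl_neg]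
      rw [ih i (c - unit n a) (tA res (i + l.length + 1) a v)
        (Hm_tA res (i + l.length + 1) c v hv' a)
        (by rw [sum_sub_unit, hc]; push_cast [List.length_cons]; ring) j hjl, neg_zero]

/-- pulling the top strand map out to the bottom -/
lemma tl_pull (hlin : ∀ (i : ℕ) (x : res.ι i), (∑ j, res.deg i x j) = (i : ℤ)) :
    ∀ (l : List (Fin n)) (i : ℕ) (c : Fin n → ℤ) (j : Fin n)
    (v : VV res (i + l.length + 1)), Hm res (i + l.length + 1) c v →
    (∑ j', c j') = ((i + l.length + 1 : ℕ) : ℤ) →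
    ∀ (e : i + l.length + 1 = (i+1) + l.length),
    tl res i l (tA res (i + l.length) j v) = tA res i j (tl res (i+1) l (shV res e v)) ∨
    tl res i l (tA res (i + l.length) j v) = - tA res i j (tl res (i+1) l (shV res e v)) := by
  intro l
  induction l with
  | nil =>
    intro i c j v _ _ e
    exact Or.inl (by rw [shV_rfl]; rfl)
  | cons a l ih =>
    intro i c j v hv hc e
    have hv' : Hm res (i + l.length + 2) c v := hv
    have hc' : (∑ j', c j') = ((i + l.length : ℕ) : ℤ) + 2 := by
      rw [hc]; push_cast [List.length_cons]; ring
    have hstep : tl res i (a :: l) (tA res (i + (a :: l).length) j v)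
        = tl res i l (tA res (i + l.length) a (tA res (i + l.length + 1) j v)) := rfl
    have e' : i + l.length + 1 = (i+1) + l.length := by omega
    have e'' : i + l.length + 1 + 1 = (i+1) + l.length + 1 := by omega
    have hIH := ih i (c - unit n a) j (tA res (i + l.length + 1) a v)
      (Hm_tA res (i + l.length + 1) c v hv' a)
      (by rw [sum_sub_unit, hc]; push_cast [List.length_cons]; ring) e'
    have hsh : shV res e' (tA res (i + l.length + 1) a v)
        = tA res ((i+1) + l.length) a (shV res e'' v) := shV_tA res e' e'' a v
    have hswap : tA res (i + l.length) a (tA res (i + l.length + 1) j v)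
        = - tA res (i + l.length) j (tA res (i + l.length + 1) a v) :=
      tAtA_swap res hlin (i + l.length) c v hv' hc' a j
    have hre : tA res i j (tl res (i+1) l (shV res e' (tA res (i + l.length + 1) a v)))
        = tA res i j (tl res (i+1) (a :: l) (shV res e v)) := by
      rw [hsh]; rfl
    rw [hstep, hswap, tl_neg]
    rcases hIH with h | h
    · right; rw [h, ← hre]
    · left; rw [h, neg_neg, ← hre]

/-- master extraction: from a nonzero homogeneous element at level i+k we obtain a
k-element set F of variables such that every subset can be applied (in some order)
without killing the element -/
lemma master (hlin : ∀ (i : ℕ) (x : res.ι i), (∑ j, res.deg i x j) = (i : ℤ)) :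
    ∀ (k i : ℕ) (c : Fin n → ℤ) (v : VV res (i + k)),
    v ≠ 0 → Hm res (i + k) c v → (∑ j', c j') = ((i + k : ℕ) : ℤ) →
    ∃ F : Finset (Fin n), F.card = k ∧ ∀ w ⊆ F,
      ∃ (m : ℕ) (l : List (Fin n)) (hm : i + k = m + l.length),
        l.Nodup ∧ l.toFinset = w ∧ tl res m l (shV res hm v) ≠ 0 := by
  intro k
  induction k with
  | zero =>
    intro i c v hv _ _
    refine ⟨∅, Finset.card_empty, ?_⟩
    intro w hw
    have hw0 : w = ∅ := Finset.subset_empty.mp hw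
    subst hw0
    exact ⟨i, [], rfl, List.nodup_nil, List.toFinset_nil, by rw [shV_rfl]; exact hv⟩
  | succ k ih =>
    intro i c v hv hhom hc
    have hhom' : Hm res ((i+k)+1) c v := hhom
    obtain ⟨j, hj⟩ := exists_tA_ne res hlin (i+k) c v hhom'
      (by rw [hc]; push_cast; ring) hv
    have hhomj : Hm res (i+k) (c - unit n j) (tA res (i+k) j v) :=
      Hm_tA res (i+k) c v hhom' j
    have hcj : (∑ j', (c - unit n j) j') = ((i + k : ℕ) : ℤ) := by
      rw [sum_sub_unit, hc]; push_cast; ring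
    obtain ⟨F', hcard, hwit⟩ := ih i (c - unit n j) (tA res (i+k) j v) hj hhomj hcj
    have hjF : j ∉ F' := by
      intro hmem
      obtain ⟨m, l, hm, hnd, htf, hne⟩ := hwit {j} (Finset.singleton_subset_iff.mpr hmem)
      have hlen : l.length = 1 := by
        rw [← List.toFinset_card_of_nodup hnd, htf, Finset.card_singleton]
      obtain ⟨b, hb⟩ := List.length_eq_one_iff.mp hlen
      have hbj : b = j := by rw [hb] at htf; simpa using htf
      rw [hbj] at hb
      subst hb
      apply hne
      have hm'' : (i + k) + 1 = (m + 1) + 1 := by omega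
      have hshv : shV res hm (tA res (i+k) j v) = tA res (m+1) j (shV res hm'' v) :=
        shV_tA res hm hm'' j v
      rw [hshv]
      have hz : tA res m j (tA res (m+1) j (shV res hm'' v)) = 0 := by
        refine tAtA_self res hlin m c (shV res hm'' v)
          (shV_Hm res hm'' c v hhom') ?_ j
        rw [hc]
        have : i + (k+1) = m + 2 := by omega
        rw [this]; push_cast; ring
      exact hz
    refine ⟨insert j F', by rw [Finset.card_insert_of_notMem hjF, hcard], ?_⟩
    intro w hw
    by_cases hjw : j ∈ w
    · have hsub : w.erase j ⊆ F' := by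
        intro x hx
        rcases Finset.mem_insert.mp (hw (Finset.mem_of_mem_erase hx)) with h1 | h1
        · exact absurd hx (by rw [h1]; exact Finset.notMem_erase j w)
        · exact h1
      obtain ⟨m, l, hm, hnd, htf, hne⟩ := hwit (w.erase j) hsub
      have hm2 : i + (k+1) = m + (j :: l).length := by
        simp only [List.length_cons]; omega
      refine ⟨m, j :: l, hm2, ?_, ?_, ?_⟩
      · refine List.nodup_cons.mpr ⟨fun hjl => ?_, hnd⟩
        exact (Finset.notMem_erase j w) (htf ▸ List.mem_toFinset.mpr hjl)
      · rw [List.toFinset_cons, htf, Finset.insert_erase hjw]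
      · have hm'' : (i + k) + 1 = (m + l.length) + 1 := by omega
        have key : tl res m (j :: l) (shV res hm2 v)
            = tl res m l (shV res hm (tA res (i+k) j v)) := by
          rw [tl_cons, shV_tA res hm hm'' j v]
        intro h0
        exact hne (by rw [← key]; exact h0)
    · have hsub : w ⊆ F' := by
        intro x hx
        rcases Finset.mem_insert.mp (hw hx) with h1 | h1
        · exact absurd (h1 ▸ hx) (h1 ▸ hjw)
        · exact h1
      obtain ⟨m, l, hm, hnd, htf, hne⟩ := hwit w hsub
      have hm3 : i + (k+1) = (m+1) + l.length := by omega
      refine ⟨m+1, l, hm3, hnd, htf, ?_⟩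
      intro h0
      apply hne
      have hm'' : (i + k) + 1 = (m + l.length) + 1 := by omega
      have e : m + l.length + 1 = (m+1) + l.length := by omega
      have hshv : shV res hm (tA res (i+k) j v) = tA res (m + l.length) j (shV res hm'' v) :=
        shV_tA res hm hm'' j v
      have hhomu : Hm res (m + l.length + 1) c (shV res hm'' v) :=
        shV_Hm res hm'' c v hhom'
      have hcu : (∑ j', c j') = ((m + l.length + 1 : ℕ) : ℤ) := by
        rw [hc]
        have : i + (k+1) = m + l.length + 1 := by omega
        rw [this]
      have hz : tA res m j (tl res (m+1) l (shV res e (shV res hm'' v))) = 0 := by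
        rw [shV_shV]
        have h0' : tl res (m+1) l (shV res (hm''.trans e) v) = 0 := h0
        rw [h0', map_zero]
      rcases tl_pull res hlin l m c j (shV res hm'' v) hhomu hcu e with hp | hp
      · rw [hshv, hp]
        exact hz
      · rw [hshv, hp, hz, neg_zero]

lemma deg_nonneg (hdeg0 : ∀ x : res.ι 0, res.deg 0 x = 0) :
    ∀ (i : ℕ) (x : res.ι i) (j : Fin n), 0 ≤ res.deg i x j := by
  intro i
  induction i with
  | zero => intro x j; rw [hdeg0 x]; exact le_refl 0
  | succ i ihd =>
    intro x j
    have hne : res.d i (Finsupp.single x 1) ≠ 0 := by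
      intro h0
      obtain ⟨wz, hwz⟩ := (res.exact i _).mp h0
      have h1 : MvPolynomial.coeff 0 ((Finsupp.single x (1 : MvPolynomial (Fin n) K)
          : FF res (i+1)) x) = 1 := by
        rw [Finsupp.single_eq_same]
        simp
      rw [← hwz, zc res (i+1) wz x] at h1
      exact (one_ne_zero (α := K)) h1.symm
    obtain ⟨y, hy⟩ := Finsupp.ne_iff.mp hne
    have hy' : res.d i (Finsupp.single x 1) y ≠ 0 := by simpa using hy
    obtain ⟨m, hm⟩ := MvPolynomial.ne_zero_iff.mp hy'
    have hg := res.graded i x y m hm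
    have hgj := congrFun hg j
    simp only [Pi.add_apply] at hgj
    rw [← hgj]
    have := ihd y j
    positivity

lemma el_nodup (l : List (Fin n)) (hnd : l.Nodup) :
    el (n := n) l = fun j => if j ∈ l.toFinset then (1:ℤ) else 0 := by
  induction l with
  | nil => funext j; simp [el]
  | cons a l ih =>
    obtain ⟨hal, hnd'⟩ := List.nodup_cons.mp hnd
    funext j
    have : el (a :: l) j = unit n a j + el l j := rfl
    rw [this, ih hnd', unit]
    rcases eq_or_ne a j with rfl | hne
    · simp [hal]
    · simp [hne, Ne.symm hne]

end LRB

/-- Let `M` be a bounded below `ℤⁿ`-graded module over `S = K[X₁,…,Xₙ]` with a *linear*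
resolution (normalized so that the generators sit in degree `0`): in terms of a minimal
graded free resolution `res`, all basis elements of `F_0` have multidegree `0` and every
basis element of `F_i` has total degree `i`, i.e. `Tor_i^S(M,K)_b = 0` unless `|b| = i`.
If `Tor_p^S(M,K) ≠ 0` (i.e. `F_p ≠ 0`), then for each `0 ≤ i ≤ p` there exist at least
`binom(p,i)` distinct multidegrees `b ∈ ℕⁿ` with `|b| = i` and `Tor_i^S(M,K)_b ≠ 0`
(i.e. some basis element of `F_i` has multidegree `b`). -/
theorem linear_resolution_betti_lower_bound (K : Type) [Field K] (n : ℕ)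
    (M : Type) [AddCommGroup M] [Module (MvPolynomial (Fin n) K) M]
    (res : MinGradedFreeRes K n M)
    (hdeg0 : ∀ x : res.ι 0, res.deg 0 x = 0)
    (hlin : ∀ (i : ℕ) (x : res.ι i), (∑ j, res.deg i x j) = (i : ℤ))
    (p : ℕ) (hp : Nonempty (res.ι p)) :
    ∀ i ≤ p, ∃ B : Finset (Fin n → ℤ), p.choose i ≤ B.card ∧
      ∀ b ∈ B, (∀ j, 0 ≤ b j) ∧ (∑ j, b j) = (i : ℤ) ∧ ∃ x : res.ι i, res.deg i x = b := by
  intro i hip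
  obtain ⟨x₀⟩ := hp
  set a : Fin n → ℤ := res.deg p x₀ with ha
  have hv0 : (Finsupp.single x₀ (1:K) : LRB.VV res p) ≠ 0 := by
    intro h
    have := congrFun (congrArg (fun f : LRB.VV res p => (f : res.ι p → K)) h) x₀
    simp at this
  have hhom0 : LRB.Hm res p a (Finsupp.single x₀ 1) := by
    intro x hx
    have hxx : x = x₀ := by
      by_contra hne
      rw [Finsupp.single_eq_of_ne' (Ne.symm hne)] at hx
      exact hx rfl
    rw [hxx]
  have hsum : (∑ j', a j') = (p : ℤ) := hlin p x₀
  have h0p : p = 0 + p := (Nat.zero_add p).symm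
  obtain ⟨F, hFcard, hFwit⟩ := LRB.master res hlin p 0 a
    (LRB.shV res h0p (Finsupp.single x₀ 1))
    ((LRB.shV_ne_zero res h0p _).mpr hv0)
    (LRB.shV_Hm res h0p a _ hhom0)
    (by rw [hsum]; norm_num)
  refine ⟨(F.powersetCard (p - i)).image
    (fun w => a - fun j => if j ∈ w then (1:ℤ) else 0), ?_, ?_⟩
  · have hinj : Function.Injective
        (fun w : Finset (Fin n) => a - fun j => if j ∈ w then (1:ℤ) else 0) := by
      intro w1 w2 h
      ext j
      have hj := congrFun h j
      simp only [Pi.sub_apply] at hj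
      by_cases h1 : j ∈ w1 <;> by_cases h2 : j ∈ w2
      · simp [h1, h2]
      · exfalso; rw [if_pos h1, if_neg h2] at hj; omega
      · exfalso; rw [if_neg h1, if_pos h2] at hj; omega
      · simp [h1, h2]
    rw [Finset.card_image_of_injective _ hinj, Finset.card_powersetCard, hFcard,
      Nat.choose_symm hip]
  · intro b hb
    obtain ⟨w, hwmem, hwb⟩ := Finset.mem_image.mp hb
    obtain ⟨hwF, hwcard⟩ := Finset.mem_powersetCard.mp hwmem
    obtain ⟨m, l, hm, hnd, htf, hne⟩ := hFwit w hwF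
    have hlen : l.length = p - i := by
      rw [← List.toFinset_card_of_nodup hnd, htf, hwcard]
    have hmi : m = i := by omega
    have hH : LRB.Hm res m (a - LRB.el l)
        (LRB.tl res m l (LRB.shV res hm (LRB.shV res h0p (Finsupp.single x₀ 1)))) := by
      refine LRB.tl_Hm res m l a _ ?_
      exact LRB.shV_Hm res hm a _ (LRB.shV_Hm res h0p a _ hhom0)
    obtain ⟨x, hx⟩ := Finsupp.ne_iff.mp hne
    have hx' : (LRB.tl res m l (LRB.shV res hm (LRB.shV res h0p (Finsupp.single x₀ 1)))) x ≠ 0 := by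
      simpa using hx
    have hdx : res.deg m x = a - LRB.el l := hH x hx'
    have hel : LRB.el (n := n) l = fun j => if j ∈ w then (1:ℤ) else 0 := by
      rw [LRB.el_nodup l hnd, htf]
    have hdb : res.deg m x = b := by rw [hdx, hel, ← hwb]
    subst hmi
    exact ⟨fun j => hdb ▸ LRB.deg_nonneg res hdeg0 m x j,
      by rw [← hdb]; exact hlin m x, ⟨x, hdb⟩⟩
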